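/- Let Σ be a real diagonal e×e matrix with diagonal entries in (0, 1/σ] for some σ > 0, let A be a real e×n matrix (e ≥ 1, n ≥ 1), and let B = [Σ A −Σ] be the e×(n+e) block matrix. Then the largest eigenvalue of BᵀB is at most (1/σ²)·(λ_max(A Aᵀ) + 1). -/

import Mathlib

open Matrix

section Aux

variable {ι : Type*} [Fintype ι] [DecidableEq ι]

private lemma rayleigh_upper [Nonempty ι] {M : Matrix ι ι ℝ} (hM : M.IsHermitian)
    (x : ι → ℝ) : x ⬝ᵥ (M *ᵥ x) ≤ (⨆ i, hM.eigenvalues i) * (x ⬝ᵥ x) := by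
  set U : Matrix ι ι ℝ := (hM.eigenvectorUnitary : Matrix ι ι ℝ) with hUdef
  have hUU : U * Uᵀ = 1 := by
    have := (Matrix.mem_unitaryGroup_iff).mp hM.eigenvectorUnitary.2
    simpa [star_eq_conjTranspose, conjTranspose_eq_transpose_of_trivial] using this
  set y : ι → ℝ := Uᵀ *ᵥ x with hy
  have hyy : y ⬝ᵥ y = x ⬝ᵥ x := by
    rw [hy, dotProduct_mulVec _ Uᵀ x, vecMul_transpose, mulVec_mulVec, hUU, one_mulVec]
  have hstar : star U = Uᵀ := by
    ext i j; simp [star_eq_conjTranspose, conjTranspose_apply]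
  have hM' : M = U * diagonal hM.eigenvalues * Uᵀ := by
    have hsp := hM.spectral_theorem
    simp only [RCLike.ofReal_real_eq_id, Function.id_comp, hstar] at hsp
    exact hsp
  have key : x ⬝ᵥ (M *ᵥ x) = ∑ i, hM.eigenvalues i * (y i * y i) := by
    conv_lhs => rw [hM', ← mulVec_mulVec, ← mulVec_mulVec, dotProduct_mulVec x,
      ← mulVec_transpose]
    simp only [dotProduct, mulVec_diagonal, ← hy]
    exact Finset.sum_congr rfl fun i _ => by ring
  rw [key, ← hyy, dotProduct, Finset.mul_sum]
  apply Finset.sum_le_sum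
  intro i _
  exact mul_le_mul_of_nonneg_right
    (le_ciSup (Set.finite_range hM.eigenvalues).bddAbove i) (mul_self_nonneg _)

private lemma iSup_eig_le [Nonempty ι] {M : Matrix ι ι ℝ} (hM : M.IsHermitian) {c : ℝ}
    (h : ∀ x : ι → ℝ, x ⬝ᵥ (M *ᵥ x) ≤ c * (x ⬝ᵥ x)) : (⨆ i, hM.eigenvalues i) ≤ c := by
  refine ciSup_le fun i => ?_
  have hev := hM.eigenvalues_eq i
  set v : ι → ℝ := ⇑(hM.eigenvectorBasis i) with hv
  have hvv : v ⬝ᵥ v = 1 := by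
    have hnorm : ‖hM.eigenvectorBasis i‖ = 1 := hM.eigenvectorBasis.orthonormal.1 i
    have : (inner ℝ (hM.eigenvectorBasis i) (hM.eigenvectorBasis i) : ℝ) = 1 := by
      rw [real_inner_self_eq_norm_sq, hnorm]; norm_num
    rw [← this]
    simp [inner, dotProduct, hv]
  calc hM.eigenvalues i = v ⬝ᵥ (M *ᵥ v) := by simpa [dotProduct] using hev
    _ ≤ c * (v ⬝ᵥ v) := h v
    _ = c := by rw [hvv, mul_one]

end Aux

/-- Combining steps 4–6 of Appendix A: if `S` is diagonal with diagonal entries in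
`(0, 1/σ]` and `B = [S·A  −S]`, then the largest eigenvalue of the Gram block
`BᵀB` is at most `(1/σ²)(λ_max(A·Aᵀ) + 1)`. -/
theorem gram_block_maxEig_bound (e n : ℕ) (he : 1 ≤ e) (hn : 1 ≤ n)
    (σ : ℝ) (hσ : 0 < σ)
    (S : Matrix (Fin e) (Fin e) ℝ) (hS : S.IsDiag)
    (hdiag : ∀ i, 0 < S i i ∧ S i i ≤ 1 / σ)
    (A : Matrix (Fin e) (Fin n) ℝ)
    (B : Matrix (Fin e) (Fin n ⊕ Fin e) ℝ)
    (hB : B = Matrix.fromCols (S * A) (-S))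
    (h₁ : (Bᵀ * B).IsHermitian) (h₂ : (A * Aᵀ).IsHermitian) :
    (⨆ i, h₁.eigenvalues i) ≤ (1 / σ ^ 2) * ((⨆ i, h₂.eigenvalues i) + 1) := by
  haveI : Nonempty (Fin e) := ⟨⟨0, he⟩⟩
  haveI : Nonempty (Fin n) := ⟨⟨0, hn⟩⟩
  set lam : ℝ := ⨆ i, h₂.eigenvalues i with hlam
  -- nonnegativity of lam
  have hpsd : (A * Aᵀ).PosSemidef := by
    have hAT : Aᵀ = Aᴴ := by ext i j; simp [conjTranspose_apply]
    rw [hAT]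
    exact Matrix.posSemidef_self_mul_conjTranspose A
  have hlam0 : 0 ≤ lam := le_trans (hpsd.eigenvalues_nonneg ⟨0, he⟩)
    (le_ciSup (Set.finite_range h₂.eigenvalues).bddAbove ⟨0, he⟩)
  apply iSup_eig_le
  intro x
  set x₁ : Fin n → ℝ := x ∘ Sum.inl with hx₁
  set x₂ : Fin e → ℝ := x ∘ Sum.inr with hx₂
  have hx : x = Sum.elim x₁ x₂ := by funext s; cases s <;> rfl
  set v : Fin e → ℝ := A *ᵥ x₁ with hv
  set u : Fin e → ℝ := v - x₂ with hu
  have hBx : B *ᵥ x = S *ᵥ u := by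
    rw [hB, hx, fromCols_mulVec_sumElim, hu, mulVec_sub, mulVec_mulVec, neg_mulVec,
      sub_eq_add_neg]
  have hquad : x ⬝ᵥ ((Bᵀ * B) *ᵥ x) = (S *ᵥ u) ⬝ᵥ (S *ᵥ u) := by
    rw [← mulVec_mulVec, dotProduct_mulVec x Bᵀ, vecMul_transpose, hBx]
  -- step 1 : the diagonal scaling
  have hSd : ∀ (w : Fin e → ℝ) (i : Fin e), (S *ᵥ w) i = S i i * w i := by
    intro w i
    conv_lhs => rw [← hS.diagonal_diag]
    rw [mulVec_diagonal]
    rfl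
  have hSnorm : (S *ᵥ u) ⬝ᵥ (S *ᵥ u) ≤ (1 / σ ^ 2) * (u ⬝ᵥ u) := by
    simp only [dotProduct]
    rw [Finset.mul_sum]
    apply Finset.sum_le_sum
    intro i _
    rw [hSd]
    have h1 := (hdiag i).1
    have h2 := (hdiag i).2
    have e1 : (S i i * u i) * (S i i * u i) = (S i i) ^ 2 * (u i * u i) := by ring
    have e2 : (1 : ℝ) / σ ^ 2 = (1 / σ) ^ 2 := by rw [div_pow, one_pow]
    rw [e1, e2]
    exact mul_le_mul_of_nonneg_right (pow_le_pow_left₀ h1.le h2 2) (mul_self_nonneg _)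
  -- step 2 : ‖A x₁‖² ≤ lam ‖x₁‖²
  set a : ℝ := v ⬝ᵥ v with hadef
  set b : ℝ := v ⬝ᵥ x₂ with hbdef
  set p : ℝ := x₁ ⬝ᵥ x₁ with hpdef
  set c : ℝ := x₂ ⬝ᵥ x₂ with hcdef
  have ha0 : 0 ≤ a := Finset.sum_nonneg fun i _ => mul_self_nonneg _
  have hp0 : 0 ≤ p := Finset.sum_nonneg fun i _ => mul_self_nonneg _
  have hc0 : 0 ≤ c := Finset.sum_nonneg fun i _ => mul_self_nonneg _
  set z : Fin n → ℝ := Aᵀ *ᵥ v with hz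
  have h1 : a = z ⬝ᵥ x₁ := by
    rw [hadef, hz, hv, dotProduct_mulVec, mulVec_transpose]
  have h2 : z ⬝ᵥ z = v ⬝ᵥ ((A * Aᵀ) *ᵥ v) := by
    rw [hz, ← mulVec_mulVec, dotProduct_mulVec v A, mulVec_transpose]
  have h3 : z ⬝ᵥ z ≤ lam * a := h2 ▸ rayleigh_upper h₂ v
  have h4 : a ^ 2 ≤ (z ⬝ᵥ z) * p := by
    rw [h1, hpdef]
    have := Finset.sum_mul_sq_le_sq_mul_sq Finset.univ z x₁
    simpa [dotProduct, sq] using this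
  have ha : a ≤ lam * p := by nlinarith [mul_nonneg hlam0 hp0]
  -- step 3 : Cauchy-Schwarz for the cross term
  have hb2 : b ^ 2 ≤ a * c := by
    rw [hbdef, hadef, hcdef]
    have := Finset.sum_mul_sq_le_sq_mul_sq Finset.univ v x₂
    simpa [dotProduct, sq] using this
  -- combine
  have huu : u ⬝ᵥ u = a - 2 * b + c := by
    rw [hu, dotProduct_sub, sub_dotProduct, sub_dotProduct, dotProduct_comm x₂ v,
      ← hadef, ← hbdef, ← hcdef]
    ring
  have hmid : u ⬝ᵥ u ≤ (lam + 1) * (p + c) := by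
    rw [huu]
    nlinarith [sq_nonneg (lam * c + p + 2 * b), sq_nonneg (lam * c - p), mul_nonneg hlam0 hc0]
  have hxx : x ⬝ᵥ x = p + c := by
    rw [hpdef, hcdef, dotProduct, dotProduct, dotProduct, hx, Fintype.sum_sum_type]
    simp
  have hσ2 : (0 : ℝ) ≤ 1 / σ ^ 2 := by positivity
  calc x ⬝ᵥ ((Bᵀ * B) *ᵥ x) = (S *ᵥ u) ⬝ᵥ (S *ᵥ u) := hquad
    _ ≤ (1 / σ ^ 2) * (u ⬝ᵥ u) := hSnorm
    _ ≤ (1 / σ ^ 2) * ((lam + 1) * (p + c)) := by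
        exact mul_le_mul_of_nonneg_left hmid hσ2
    _ = (1 / σ ^ 2) * (lam + 1) * (x ⬝ᵥ x) := by rw [hxx]; ring
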